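/- For d+2 points in ℝ^d, after possibly renumbering, there is a hyperplane strictly separating one point from the other d+1 points, provided the points are in general position. -/
import Mathlib

theorem exists_separating_hyperplane (d : ℕ) (hd : 1 ≤ d)
    (p : Fin (d + 2) → (Fin d → ℝ))
    (hgen : ∀ s : Finset (Fin (d + 2)), s.card = d + 1 →
      AffineIndependent ℝ (fun i : s => p i)) :
    ∃ (i : Fin (d + 2)) (f : (Fin d → ℝ) →ᵃ[ℝ] ℝ),
      f (p i) < 0 ∧ ∀ j, j ≠ i → 0 < f (p j) := by
  classical
  -- Step 1: p is injective
  have hinj : Function.Injective p := by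
    intro i j hpij
    by_contra hne
    obtain ⟨k, hk⟩ : ∃ k : Fin (d + 2), k ∉ ({i, j} : Finset (Fin (d + 2))) := by
      by_contra h
      push_neg at h
      have h1 : (Finset.univ : Finset (Fin (d + 2))) ⊆ {i, j} := fun x _ => h x
      have h2 := Finset.card_le_card h1
      have h3 : ({i, j} : Finset (Fin (d + 2))).card ≤ 2 :=
        (Finset.card_insert_le _ _).trans (by simp)
      simp only [Finset.card_univ, Fintype.card_fin] at h2
      omega
    simp only [Finset.mem_insert, Finset.mem_singleton, not_or] at hk
    set s : Finset (Fin (d + 2)) := Finset.univ.erase k with hs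
    have hscard : s.card = d + 1 := by
      rw [hs, Finset.card_erase_of_mem (Finset.mem_univ k)]
      simp
    have hai := hgen s hscard
    have hi : i ∈ s := Finset.mem_erase.mpr ⟨fun h => hk.1 h.symm, Finset.mem_univ _⟩
    have hj : j ∈ s := Finset.mem_erase.mpr ⟨fun h => hk.2 h.symm, Finset.mem_univ _⟩
    have := hai.injective
      (show (fun x : s => p x) ⟨i, hi⟩ = (fun x : s => p x) ⟨j, hj⟩ from hpij)
    exact hne (congrArg Subtype.val this)
  -- Step 2: find a linear functional injective on the points
  obtain ⟨f, hf⟩ : ∃ f : (Fin d → ℝ) →ₗ[ℝ] ℝ, ∀ i j : Fin (d + 2), i ≠ j →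
      f (p i) ≠ f (p j) := by
    by_contra h
    push_neg at h
    have hcov : ⋃ q : {q : Fin (d + 2) × Fin (d + 2) // q.1 ≠ q.2},
        ((LinearMap.ker (Module.Dual.eval ℝ (Fin d → ℝ) (p q.1.1 - p q.1.2)) :
          Subspace ℝ (Module.Dual ℝ (Fin d → ℝ))) : Set (Module.Dual ℝ (Fin d → ℝ)))
        = Set.univ := by
      ext f
      simp only [Set.mem_iUnion, Set.mem_univ, iff_true, SetLike.mem_coe,
        LinearMap.mem_ker, Module.Dual.eval_apply, map_sub]
      obtain ⟨i, j, hij, hfij⟩ := h f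
      exact ⟨⟨(i, j), hij⟩, by simpa [sub_eq_zero] using hfij⟩
    obtain ⟨q, hq⟩ := Subspace.exists_eq_top_of_iUnion_eq_univ hcov
    have hv : p q.1.1 - p q.1.2 ≠ 0 := sub_ne_zero.mpr (fun h => q.2 (hinj h))
    have hv2 : ¬ ∀ φ : Module.Dual ℝ (Fin d → ℝ), φ (p q.1.1 - p q.1.2) = 0 :=
      fun h2 => hv ((Module.forall_dual_apply_eq_zero_iff ℝ _).mp h2)
    push_neg at hv2
    obtain ⟨φ, hφ⟩ := hv2
    have : φ ∈ LinearMap.ker (Module.Dual.eval ℝ (Fin d → ℝ) (p q.1.1 - p q.1.2)) := by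
      rw [hq]; trivial
    simp only [LinearMap.mem_ker, Module.Dual.eval_apply] at this
    exact hφ this
  -- Step 3: pick the maximizer
  obtain ⟨i, -, hmax⟩ := Finset.exists_max_image Finset.univ (fun j => f (p j))
    ⟨0, Finset.mem_univ 0⟩
  have hstrict : ∀ j, j ≠ i → f (p j) < f (p i) :=
    fun j hj => lt_of_le_of_ne (hmax j (Finset.mem_univ j)) (hf j i hj)
  -- Step 4: build the affine functional
  set T : Finset ℝ := (Finset.univ.erase i).image (fun j => f (p j)) with hT
  have hTne : T.Nonempty := by
    refine Finset.image_nonempty.mpr (Finset.card_pos.mp ?_)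
    rw [Finset.card_erase_of_mem (Finset.mem_univ i)]
    simp
  set m : ℝ := T.max' hTne with hm
  have hmlt : m < f (p i) := by
    obtain ⟨j, hj, hjm⟩ := Finset.mem_image.mp (T.max'_mem hTne)
    rw [hm, ← hjm]
    exact hstrict j (Finset.mem_erase.mp hj).1
  set c : ℝ := (m + f (p i)) / 2 with hc
  refine ⟨i, ⟨fun x => c - f x, -f, ?_⟩, ?_, ?_⟩
  · intro x v
    simp [vadd_eq_add, map_add]
    ring
  · simp only [AffineMap.coe_mk]
    rw [hc]; linarith
  · intro j hj
    simp only [AffineMap.coe_mk]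
    have hle : f (p j) ≤ m := T.le_max' _ (Finset.mem_image.mpr
      ⟨j, Finset.mem_erase.mpr ⟨hj, Finset.mem_univ _⟩, rfl⟩)
    have := hstrict j hj
    rw [hc]; linarith
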